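/- For every real ε > 0 and every x ∈ ℝ⁴, the function u_ε(x) = log(|x|² + ε²) satisfies Δu_ε(x) = 4(|x|² + 2ε²)/(|x|² + ε²)² and Δ²u_ε(x) = −96 ε⁴/(|x|² + ε²)⁴. -/

import Mathlib

open scoped Quaternion RealInnerProductSpace

/-- The standard real basis `1, i, j, k` of the quaternions viewed as ℝ⁴. -/
noncomputable def qBasis : Fin 4 → Quaternion ℝ
  | 0 => 1
  | 1 => ⟨0,1,0,0⟩
  | 2 => ⟨0,0,1,0⟩
  | 3 => ⟨0,0,0,1⟩

/-- The Laplacian in the four real coordinates of a quaternionic variable. -/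
noncomputable def qLap (u : Quaternion ℝ → ℝ) (x : Quaternion ℝ) : ℝ :=
  ∑ i : Fin 4, fderiv ℝ (fun y => fderiv ℝ u y (qBasis i)) x (qBasis i)

lemma qLap_comp_normsq (g g' g'' : ℝ → ℝ)
    (hg : ∀ s : ℝ, 0 ≤ s → HasDerivAt g (g' s) s)
    (hg' : ∀ s : ℝ, 0 ≤ s → HasDerivAt g' (g'' s) s)
    (x : Quaternion ℝ) :
    qLap (fun y => g (‖y‖^2)) x
      = 4 * g'' (‖x‖^2) * ‖x‖^2 + 8 * g' (‖x‖^2) := by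
  have hfd : ∀ y : Quaternion ℝ, HasFDerivAt (fun z : Quaternion ℝ => g (‖z‖^2))
      ((g' (‖y‖^2)) • (2 • innerSL ℝ y)) y := fun y =>
    (hg _ (by positivity)).comp_hasFDerivAt y (hasStrictFDerivAt_norm_sq y).hasFDerivAt
  have hw : ∀ e : Quaternion ℝ, (fun y => fderiv ℝ (fun z : Quaternion ℝ => g (‖z‖^2)) y e)
      = fun y => g' (‖y‖^2) * (2 * ⟪y, e⟫) := by
    intro e; funext y
    rw [(hfd y).fderiv]
    simp [real_inner_comm, mul_comm]
  have hsecond : ∀ e : Quaternion ℝ,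
      fderiv ℝ (fun y => fderiv ℝ (fun z : Quaternion ℝ => g (‖z‖^2)) y e) x e
        = g' (‖x‖^2) * (2 * ⟪e, e⟫)
          + (2 * ⟪x, e⟫) * (g'' (‖x‖^2) * (2 * ⟪x, e⟫)) := by
    intro e
    have h1 : HasFDerivAt (fun y : Quaternion ℝ => g' (‖y‖^2))
        ((g'' (‖x‖^2)) • (2 • innerSL ℝ x)) x :=
      (hg' _ (by positivity)).comp_hasFDerivAt x (hasStrictFDerivAt_norm_sq x).hasFDerivAt
    have h2 : HasFDerivAt (fun y : Quaternion ℝ => (2:ℝ) * ⟪y, e⟫)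
        ((2:ℝ) • innerSL ℝ e) x := by
      have h := ((2:ℝ) • innerSL ℝ e).hasFDerivAt (x := x)
      convert h using 2 with y
      simp [real_inner_comm]
    have h := h1.fun_mul h2
    rw [hw e, h.fderiv]
    simp [real_inner_comm]
  unfold qLap
  simp only [hsecond]
  have hip : ∀ a : Quaternion ℝ, ∀ b : Quaternion ℝ, ⟪a, b⟫ = (a * star b).re :=
    Quaternion.inner_def
  have hn : (‖x‖:ℝ)^2 = x.re^2 + x.imI^2 + x.imJ^2 + x.imK^2 := by
    rw [sq, ← Quaternion.normSq_eq_norm_mul_self, Quaternion.normSq_def']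
  rw [Fin.sum_univ_four]
  simp only [hip, Quaternion.re_mul, Quaternion.re_star, Quaternion.imI_star, Quaternion.imJ_star, Quaternion.imK_star]
  simp [hn, qBasis]
  ring

/-- Laplacian and bilaplacian of the regularized logarithm `log(|x|² + ε²)` on ℝ⁴. -/
theorem lap_and_bilap_regularized_log (ε : ℝ) (hε : 0 < ε) (x : Quaternion ℝ) :
    qLap (fun y => Real.log (‖y‖^2 + ε^2)) x = 4 * (‖x‖^2 + 2*ε^2) / (‖x‖^2 + ε^2)^2 ∧
    qLap (qLap (fun y => Real.log (‖y‖^2 + ε^2))) x = -96 * ε^4 / (‖x‖^2 + ε^2)^4 := by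
  have hpos : ∀ s : ℝ, 0 ≤ s → (0:ℝ) < s + ε^2 := fun s hs => by positivity
  set g1 : ℝ → ℝ := fun s => Real.log (s + ε^2) with hg1
  set g1' : ℝ → ℝ := fun s => (s + ε^2)⁻¹ with hg1'
  set g1'' : ℝ → ℝ := fun s => -(((s + ε^2)^2)⁻¹) with hg1''
  have h1 : ∀ s : ℝ, 0 ≤ s → HasDerivAt g1 (g1' s) s := by
    intro s hs
    have h := (((hasDerivAt_id s).add_const (ε^2)).log (hpos s hs).ne')
    simpa [g1, g1', one_div] using h
  have h1' : ∀ s : ℝ, 0 ≤ s → HasDerivAt g1' (g1'' s) s := by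
    intro s hs
    have h := (((hasDerivAt_id s).add_const (ε^2)).fun_inv (hpos s hs).ne')
    simpa [g1', g1'', neg_div, one_div] using h
  have L1 : ∀ y : Quaternion ℝ,
      qLap (fun y => Real.log (‖y‖^2 + ε^2)) y
        = 4 * (‖y‖^2 + 2*ε^2) / (‖y‖^2 + ε^2)^2 := by
    intro y
    have key := qLap_comp_normsq g1 g1' g1'' h1 h1' y
    have e : (fun y : Quaternion ℝ => Real.log (‖y‖^2 + ε^2))
        = fun y : Quaternion ℝ => g1 (‖y‖^2) := rfl
    rw [e, key]
    have hQ : ‖y‖^2 + ε^2 ≠ 0 := (hpos _ (by positivity)).ne'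
    simp only [g1', g1'']
    field_simp
    ring
  refine ⟨L1 x, ?_⟩
  set g2 : ℝ → ℝ := fun s => 4 * (s + 2*ε^2) / (s + ε^2)^2 with hg2
  set g2' : ℝ → ℝ := fun s => (-4*s - 12*ε^2) / (s + ε^2)^3 with hg2'
  set g2'' : ℝ → ℝ := fun s => (8*s + 32*ε^2) / (s + ε^2)^4 with hg2''
  have h2 : ∀ s : ℝ, 0 ≤ s → HasDerivAt g2 (g2' s) s := by
    intro s hs
    have hQ : s + ε^2 ≠ 0 := (hpos s hs).ne'
    have hu : HasDerivAt (fun s : ℝ => 4 * (s + 2*ε^2)) 4 s := by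
      simpa using ((hasDerivAt_id s).add_const (2*ε^2)).const_mul (4:ℝ)
    have hv : HasDerivAt (fun s : ℝ => (s + ε^2)^2) (2*(s + ε^2)) s := by
      simpa using ((hasDerivAt_id s).add_const (ε^2)).fun_pow 2
    have h : HasDerivAt g2 _ s := hu.fun_div hv (pow_ne_zero 2 hQ)
    convert h using 1
    simp only [g2']
    field_simp
    ring
  have h2' : ∀ s : ℝ, 0 ≤ s → HasDerivAt g2' (g2'' s) s := by
    intro s hs
    have hQ : s + ε^2 ≠ 0 := (hpos s hs).ne'
    have hu : HasDerivAt (fun s : ℝ => -4*s - 12*ε^2) (-4) s := by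
      simpa using ((hasDerivAt_id s).const_mul (-4:ℝ)).sub_const (12*ε^2)
    have hv : HasDerivAt (fun s : ℝ => (s + ε^2)^3) (3*(s + ε^2)^2) s := by
      simpa using ((hasDerivAt_id s).add_const (ε^2)).fun_pow 3
    have h : HasDerivAt g2' _ s := hu.fun_div hv (pow_ne_zero 3 hQ)
    convert h using 1
    simp only [g2'']
    field_simp
    ring
  have L2 : qLap (fun y => Real.log (‖y‖^2 + ε^2))
      = fun y : Quaternion ℝ => g2 (‖y‖^2) := funext fun y => by
    rw [L1 y]
  rw [L2, qLap_comp_normsq g2 g2' g2'' h2 h2' x]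
  have hQ : ‖x‖^2 + ε^2 ≠ 0 := (hpos _ (by positivity)).ne'
  simp only [g2', g2'']
  field_simp
  ring
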